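/- For any η ∈ [0,1], the convex combination h := η·f + (1-η)·g also satisfies the drawdown constraint: h(t) ≥ α · max(m, sup_{s∈[0,t]} h(s)) for every t ∈ [0,T]. -/
import Mathlib


open Set

/-- if continuous `f, g : [0,T] → ℝ` each satisfy the drawdown constraint
`≥ α · max(m, running sup)`, then any convex combination `h = η·f + (1-η)·g` with
`η ∈ [0,1]` also satisfies the drawdown constraint. -/
theorem drawdown_convex_combination
    (α m T : ℝ) (hα : α ∈ Ioo (0 : ℝ) 1) (hm : 0 < m) (hT : 0 < T)
    (f g : ℝ → ℝ) (hf : ContinuousOn f (Icc 0 T)) (hg : ContinuousOn g (Icc 0 T))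
    (hddf : ∀ t ∈ Icc (0 : ℝ) T, α * max m (sSup (f '' Icc 0 t)) ≤ f t)
    (hddg : ∀ t ∈ Icc (0 : ℝ) T, α * max m (sSup (g '' Icc 0 t)) ≤ g t)
    (η : ℝ) (hη : η ∈ Icc (0 : ℝ) 1) :
    ∀ t ∈ Icc (0 : ℝ) T,
      α * max m (sSup ((fun s => η * f s + (1 - η) * g s) '' Icc 0 t))
        ≤ η * f t + (1 - η) * g t := by
  intro t ht
  obtain ⟨hη0, hη1⟩ := hη
  have hη1' : (0:ℝ) ≤ 1 - η := by linarith
  have hsub : Icc (0:ℝ) t ⊆ Icc (0:ℝ) T := Icc_subset_Icc le_rfl ht.2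
  have hbf : BddAbove (f '' Icc 0 t) :=
    (isCompact_Icc.image_of_continuousOn (hf.mono hsub)).bddAbove
  have hbg : BddAbove (g '' Icc 0 t) :=
    (isCompact_Icc.image_of_continuousOn (hg.mono hsub)).bddAbove
  set Sf := sSup (f '' Icc 0 t)
  set Sg := sSup (g '' Icc 0 t)
  have hSh : sSup ((fun s => η * f s + (1 - η) * g s) '' Icc 0 t)
      ≤ η * Sf + (1 - η) * Sg := by
    apply Real.sSup_le
    · rintro x ⟨s, hs, rfl⟩
      have h1 : f s ≤ Sf := le_csSup hbf ⟨s, hs, rfl⟩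
      have h2 : g s ≤ Sg := le_csSup hbg ⟨s, hs, rfl⟩
      simp only
      have := mul_le_mul_of_nonneg_left h1 hη0
      have := mul_le_mul_of_nonneg_left h2 hη1'
      linarith
    · have h1 : f 0 ≤ Sf := le_csSup hbf ⟨0, ⟨le_rfl, ht.1⟩, rfl⟩
      have h2 : g 0 ≤ Sg := le_csSup hbg ⟨0, ⟨le_rfl, ht.1⟩, rfl⟩
      have hfm : α * m ≤ f 0 :=
        le_trans (mul_le_mul_of_nonneg_left (le_max_left _ _) hα.1.le)
          (hddf 0 ⟨le_rfl, hT.le⟩)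
      have hgm : α * m ≤ g 0 :=
        le_trans (mul_le_mul_of_nonneg_left (le_max_left _ _) hα.1.le)
          (hddg 0 ⟨le_rfl, hT.le⟩)
      have hSf : 0 < Sf := lt_of_lt_of_le (mul_pos hα.1 hm) (hfm.trans h1)
      have hSg : 0 < Sg := lt_of_lt_of_le (mul_pos hα.1 hm) (hgm.trans h2)
      nlinarith
  have key : max m (sSup ((fun s => η * f s + (1 - η) * g s) '' Icc 0 t))
      ≤ η * max m Sf + (1 - η) * max m Sg := by
    apply max_le
    · nlinarith [le_max_left m Sf, le_max_left m Sg]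
    · refine hSh.trans ?_
      have := le_max_right m Sf
      have := le_max_right m Sg
      nlinarith
  have h1 := hddf t ht
  have h2 := hddg t ht
  calc α * max m (sSup ((fun s => η * f s + (1 - η) * g s) '' Icc 0 t))
      ≤ α * (η * max m Sf + (1 - η) * max m Sg) := by
        exact mul_le_mul_of_nonneg_left key hα.1.le
    _ = η * (α * max m Sf) + (1 - η) * (α * max m Sg) := by ring
    _ ≤ η * f t + (1 - η) * g t := by nlinarith
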